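/- Let α, β > 0 and s, σ ∈ ℝ. Then there exists ε₀ ∈ (0,1) such that for every ε ∈ (0, ε₀) there exist an integer N ≥ 3, a function φ̂ : ℕ₀ → ℂ with φ̂(n) = 0 for n ∉ {0, N} and Σ_{n∈ℕ₀} ⟨n⟩^{2s} |φ̂(n)|² < ε², a time T ∈ (0, ε), and a function a : [0,T] × ℕ₀ → ℂ such that: (i) for every n ∈ ℕ₀ the map t ↦ a(t,n) is differentiable on [0,T] and satisfies ∂_t a(t,n) + i n^α a(t,n) = Σ_{n₁,n₂ ∈ ℕ₀, n₁+n₂=n} a(t,n₁) n₂^β a(t,n₂) for all t ∈ [0,T], with a(0,n) = φ̂(n); and (ii) Σ_{n∈ℕ₀} ⟨n⟩^{2σ} |a(T,n)|² > ε^{−2}. (This is norm inflation with infinite loss of regularity, expressed in Fourier coefficients, for ∂_t u + i D^α u = u D^β u on the torus 𝕋.) -/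

import Mathlib

open MeasureTheory

/-- Japanese bracket `⟨x⟩ = (1 + x²)^{1/2}`. -/
noncomputable def jap (x : ℝ) : ℝ := Real.sqrt (1 + x ^ 2)

namespace NIAux

/-- `λ_n = c n^β - i n^α` (growth rate of mode `n` around the constant state `c`). -/
noncomputable def lamC (α β cr : ℝ) (n : ℕ) : ℂ :=
  ((cr * (n : ℝ) ^ β : ℝ) : ℂ) - Complex.I * (((n : ℝ) ^ α : ℝ) : ℂ)

/-- Duhamel step: value of mode `k·N` given previous modes `f j = a(·, j·N)`. -/
noncomputable def duh (α β cr : ℝ) (N : ℕ) (bc : ℂ) (f : ℕ → ℝ → ℂ) (k : ℕ) (t : ℝ) : ℂ :=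
  Complex.exp (lamC α β cr (k * N) * t) *
    ((if k = 1 then bc else 0) +
     ∫ s in (0:ℝ)..t, Complex.exp (-(lamC α β cr (k * N)) * s) *
        ∑ j ∈ Finset.Ico 1 k, f j s * ((((k - j) * N : ℕ) : ℝ) ^ β : ℝ) * f (k - j) s)

noncomputable def Bseq (α β cr : ℝ) (N : ℕ) (bc cc : ℂ) : ℕ → ℕ → ℝ → ℂ
  | 0 => fun j _ => if j = 0 then cc else 0
  | (m+1) => fun j => if j ≤ m then Bseq α β cr N bc cc m j
                      else duh α β cr N bc (Bseq α β cr N bc cc m) j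

noncomputable def Aseq (α β cr : ℝ) (N : ℕ) (bc cc : ℂ) (k : ℕ) : ℝ → ℂ :=
  Bseq α β cr N bc cc k k

variable {α β cr : ℝ} {N : ℕ} {bc cc : ℂ}

lemma Aseq_zero : Aseq α β cr N bc cc 0 = fun _ => cc := rfl

lemma duh_congr {f g : ℕ → ℝ → ℂ} {k : ℕ} (h : ∀ j, 1 ≤ j → j < k → f j = g j) :
    duh α β cr N bc f k = duh α β cr N bc g k := by
  unfold duh
  have : (fun s : ℝ => Complex.exp (-(lamC α β cr (k * N)) * s) *
      ∑ j ∈ Finset.Ico 1 k, f j s * ((((k - j) * N : ℕ) : ℝ) ^ β : ℝ) * f (k - j) s)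
      = (fun s : ℝ => Complex.exp (-(lamC α β cr (k * N)) * s) *
      ∑ j ∈ Finset.Ico 1 k, g j s * ((((k - j) * N : ℕ) : ℝ) ^ β : ℝ) * g (k - j) s) := by
    funext s'
    congr 1
    refine Finset.sum_congr rfl (fun j hj => ?_)
    rw [Finset.mem_Ico] at hj
    have h1 : f j = g j := h j hj.1 hj.2
    have h2 : f (k - j) = g (k - j) := h (k - j) (by omega) (by omega)
    rw [h1, h2]
  rw [this]

lemma Bseq_eq_Aseq : ∀ m j, j ≤ m → Bseq α β cr N bc cc m j = Aseq α β cr N bc cc j := by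
  intro m
  induction m with
  | zero => intro j hj; interval_cases j; rfl
  | succ m ih =>
    intro j hj
    rcases Nat.lt_or_ge j (m+1) with h | h
    · have hjm : j ≤ m := by omega
      show (if j ≤ m then Bseq α β cr N bc cc m j else _) = _
      rw [if_pos hjm]; exact ih j hjm
    · have hj' : j = m + 1 := by omega
      subst hj'; rfl

lemma Aseq_succ (k : ℕ) :
    Aseq α β cr N bc cc (k+1) = duh α β cr N bc (Aseq α β cr N bc cc) (k+1) := by
  have h1 : Aseq α β cr N bc cc (k+1) = duh α β cr N bc (Bseq α β cr N bc cc k) (k+1) := by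
    show Bseq α β cr N bc cc (k+1) (k+1) = _
    show (if k + 1 ≤ k then _ else duh α β cr N bc (Bseq α β cr N bc cc k) (k+1)) = _
    rw [if_neg (by omega)]
  rw [h1]
  exact duh_congr (fun j hj1 hjk => Bseq_eq_Aseq k j (by omega))


lemma exp_mul_continuous (z : ℂ) : Continuous (fun t : ℝ => Complex.exp (z * t)) :=
  Complex.continuous_exp.comp (continuous_const.mul Complex.continuous_ofReal)

lemma exp_mul_hasDerivAt (z : ℂ) (t : ℝ) :
    HasDerivAt (fun t : ℝ => Complex.exp (z * t)) (z * Complex.exp (z * t)) t := by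
  simpa [mul_comm] using (((hasDerivAt_id (t : ℂ)).const_mul z).cexp).comp_ofReal (z := t)

lemma Aseq_continuous : ∀ k, Continuous (Aseq α β cr N bc cc k) := by
  intro k
  induction k using Nat.strong_induction_on with
  | _ k ih =>
    match k with
    | 0 => exact continuous_const
    | (k+1) =>
      rw [Aseq_succ]
      unfold duh
      refine (exp_mul_continuous _).mul (continuous_const.add ?_)
      have hg : Continuous (fun s : ℝ => Complex.exp (-(lamC α β cr ((k+1) * N)) * s) *
          ∑ j ∈ Finset.Ico 1 (k+1),
            Aseq α β cr N bc cc j s * ((((k+1 - j) * N : ℕ) : ℝ) ^ β : ℝ)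
              * Aseq α β cr N bc cc (k+1 - j) s) := by
        refine (exp_mul_continuous _).mul (continuous_finset_sum _ (fun j hj => ?_))
        rw [Finset.mem_Ico] at hj
        exact ((ih j (by omega)).mul continuous_const).mul (ih (k+1-j) (by omega))
      exact intervalIntegral.continuous_primitive (fun a b => hg.intervalIntegrable a b) 0

lemma Aseq_hasDerivAt (k : ℕ) (t : ℝ) :
    HasDerivAt (Aseq α β cr N bc cc (k+1))
      (lamC α β cr ((k+1) * N) * Aseq α β cr N bc cc (k+1) t +
        ∑ j ∈ Finset.Ico 1 (k+1),
          Aseq α β cr N bc cc j t * ((((k+1 - j) * N : ℕ) : ℝ) ^ β : ℝ)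
            * Aseq α β cr N bc cc (k+1 - j) t) t := by
  set z := lamC α β cr ((k+1) * N) with hz
  set G : ℝ → ℂ := fun s => ∑ j ∈ Finset.Ico 1 (k+1),
      Aseq α β cr N bc cc j s * ((((k+1 - j) * N : ℕ) : ℝ) ^ β : ℝ)
        * Aseq α β cr N bc cc (k+1 - j) s with hG
  have hGc : Continuous G := by
    refine continuous_finset_sum _ (fun j hj => ?_)
    rw [Finset.mem_Ico] at hj
    exact ((Aseq_continuous j).mul continuous_const).mul (Aseq_continuous (k+1-j))
  have hgc : Continuous (fun s : ℝ => Complex.exp (-z * s) * G s) :=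
    (exp_mul_continuous _).mul hGc
  have h2 : HasDerivAt (fun u : ℝ => ∫ s in (0:ℝ)..u, Complex.exp (-z * s) * G s)
      (Complex.exp (-z * t) * G t) t :=
    intervalIntegral.integral_hasDerivAt_right (hgc.intervalIntegrable 0 t)
      (hgc.stronglyMeasurableAtFilter _ _) hgc.continuousAt
  have h2' : HasDerivAt (fun u : ℝ => (if k+1 = 1 then bc else 0) +
      ∫ s in (0:ℝ)..u, Complex.exp (-z * s) * G s) (Complex.exp (-z * t) * G t) t :=
    h2.const_add _
  have h1 : HasDerivAt (fun u : ℝ => Complex.exp (z * u)) (z * Complex.exp (z * t)) t :=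
    exp_mul_hasDerivAt z t
  have hmul : HasDerivAt (fun u : ℝ => Complex.exp (z * u) *
      ((if k+1 = 1 then bc else 0) + ∫ s in (0:ℝ)..u, Complex.exp (-z * s) * G s)) _ t := h1.mul h2'
  have hfun : Aseq α β cr N bc cc (k+1) = fun u : ℝ => Complex.exp (z * u) *
      ((if k+1 = 1 then bc else 0) + ∫ s in (0:ℝ)..u, Complex.exp (-z * s) * G s) := by
    rw [Aseq_succ]; rfl
  rw [hfun]
  convert hmul using 1
  have hee : Complex.exp (z * t) * Complex.exp (-z * t) = 1 := by
    rw [← Complex.exp_add, show z * (t:ℂ) + -z * t = 0 by ring, Complex.exp_zero]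
  have key : Complex.exp (z * t) * (Complex.exp (-z * t) * G t) = G t := by
    rw [← mul_assoc, hee, one_mul]
  show z * (Complex.exp (z * t) *
      ((if k+1 = 1 then bc else 0) + ∫ s in (0:ℝ)..t, Complex.exp (-z * s) * G s)) + G t = _
  rw [key]
  ring


/-- The solution: supported on multiples of `N`, mode `k·N` given by `Aseq k`. -/
noncomputable def sol (α β cr : ℝ) (N : ℕ) (bc cc : ℂ) (t : ℝ) (n : ℕ) : ℂ :=
  if N ∣ n then Aseq α β cr N bc cc (n / N) t else 0

lemma sol_not_dvd {t : ℝ} {n : ℕ} (h : ¬ N ∣ n) : sol α β cr N bc cc t n = 0 :=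
  if_neg h

lemma sol_mul (hN : 0 < N) (t : ℝ) (j : ℕ) :
    sol α β cr N bc cc t (j * N) = Aseq α β cr N bc cc j t := by
  rw [sol, if_pos (dvd_mul_left N j), Nat.mul_div_cancel j hN]

lemma Aseq_one (t : ℝ) :
    Aseq α β cr N bc cc 1 t = Complex.exp (lamC α β cr (1 * N) * t) * bc := by
  rw [Aseq_succ 0]
  unfold duh
  simp

lemma Aseq_apply_zero (k : ℕ) (hk : 2 ≤ k) : Aseq α β cr N bc cc k 0 = 0 := by
  obtain ⟨k', rfl⟩ : ∃ k', k = k' + 1 := ⟨k - 1, by omega⟩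
  rw [Aseq_succ]
  unfold duh
  rw [if_neg (by omega), intervalIntegral.integral_same]
  simp

lemma antidiagonal_sum_eq (hβ : 0 < β) (hN : 0 < N) (k : ℕ) (hk : 0 < k) (t : ℝ) :
    ∑ p ∈ Finset.HasAntidiagonal.antidiagonal (k * N),
        sol α β cr N bc cc t p.1 * (((p.2 : ℝ) ^ β : ℝ) : ℂ) * sol α β cr N bc cc t p.2
      = (cc * ((((k * N : ℕ) : ℝ) ^ β : ℝ) : ℂ) * Aseq α β cr N bc cc k t) +
        ∑ j ∈ Finset.Ico 1 k,
          Aseq α β cr N bc cc j t * ((((k - j) * N : ℕ) : ℝ) ^ β : ℝ)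
            * Aseq α β cr N bc cc (k - j) t := by
  rw [Finset.Nat.sum_antidiagonal_eq_sum_range_succ_mk]
  set h : ℕ → ℂ := fun i => sol α β cr N bc cc t i * (((k * N - i : ℕ) : ℝ) ^ β : ℝ)
      * sol α β cr N bc cc t (k * N - i) with hh
  have stepA : ∑ i ∈ Finset.range (k * N + 1), h i
      = ∑ i ∈ (Finset.range (k + 1)).image (· * N), h i := by
    refine (Finset.sum_subset ?_ ?_).symm
    · intro i hi
      rw [Finset.mem_image] at hi
      obtain ⟨j, hj, rfl⟩ := hi
      rw [Finset.mem_range] at hj ⊢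
      have : j * N ≤ k * N := Nat.mul_le_mul_right N (by omega)
      omega
    · intro i hi hnot
      have hndvd : ¬ N ∣ i := by
        intro hdvd
        obtain ⟨j, rfl⟩ := hdvd
        rw [Finset.mem_range] at hi
        refine hnot (Finset.mem_image.mpr ⟨j, ?_, mul_comm j N⟩)
        rw [Finset.mem_range]
        by_contra hc
        have : (k + 1) * N ≤ j * N := Nat.mul_le_mul_right N (by omega)
        have : N * j = j * N := mul_comm N j
        nlinarith [hN]
      rw [hh]
      simp [sol_not_dvd hndvd]
  rw [stepA, Finset.sum_image (by
    intro x hx y hy hxy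
    exact Nat.eq_of_mul_eq_mul_right hN hxy)]
  have stepC : ∀ j ∈ Finset.range (k + 1), h (j * N)
      = Aseq α β cr N bc cc j t * ((((k - j) * N : ℕ) : ℝ) ^ β : ℝ)
          * Aseq α β cr N bc cc (k - j) t := by
    intro j hj
    rw [Finset.mem_range] at hj
    have hsub : k * N - j * N = (k - j) * N := (Nat.sub_mul k j N).symm
    rw [hh]
    simp only
    rw [hsub, sol_mul hN, sol_mul hN]
  rw [Finset.sum_congr rfl stepC, Finset.sum_range_succ]
  have htop : Aseq α β cr N bc cc k t * ((((k - k) * N : ℕ) : ℝ) ^ β : ℝ)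
      * Aseq α β cr N bc cc (k - k) t = 0 := by
    rw [Nat.sub_self, Nat.zero_mul, Nat.cast_zero, Real.zero_rpow hβ.ne',
      Complex.ofReal_zero, mul_zero, zero_mul]
  rw [htop, add_zero, Finset.range_eq_Ico, Finset.sum_eq_sum_Ico_succ_bot hk]
  simp [Nat.sub_zero, Aseq_zero]


lemma sol_hasDerivAt (hα : 0 < α) (hβ : 0 < β) (hN : 0 < N) (n : ℕ) (t : ℝ) :
    HasDerivAt (fun τ => sol α β cr N bc ((cr : ℝ) : ℂ) τ n)
      (-(Complex.I * (((n : ℝ) ^ α : ℝ) : ℂ) * sol α β cr N bc ((cr : ℝ) : ℂ) t n) +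
        ∑ p ∈ Finset.HasAntidiagonal.antidiagonal n,
          sol α β cr N bc ((cr : ℝ) : ℂ) t p.1 * (((p.2 : ℝ) ^ β : ℝ) : ℂ)
            * sol α β cr N bc ((cr : ℝ) : ℂ) t p.2) t := by
  set cc : ℂ := ((cr : ℝ) : ℂ) with hcc
  by_cases hdvd : N ∣ n
  · obtain ⟨k, rfl⟩ : ∃ k, n = k * N := ⟨n / N, (Nat.div_mul_cancel hdvd).symm⟩
    have hfun : (fun τ => sol α β cr N bc cc τ (k * N)) = Aseq α β cr N bc cc k := by
      funext τ; exact sol_mul hN τ k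
    rw [hfun, sol_mul hN]
    match k with
    | 0 =>
      have hval : -(Complex.I * ((((0 * N : ℕ) : ℝ) ^ α : ℝ) : ℂ) * Aseq α β cr N bc cc 0 t) +
          ∑ p ∈ Finset.HasAntidiagonal.antidiagonal (0 * N),
            sol α β cr N bc cc t p.1 * (((p.2 : ℝ) ^ β : ℝ) : ℂ) * sol α β cr N bc cc t p.2
          = 0 := by
        rw [Nat.zero_mul]
        have : ((0:ℕ) : ℝ) ^ α = 0 := by
          rw [Nat.cast_zero]; exact Real.zero_rpow hα.ne'
        rw [this]
        have h2 : ∑ p ∈ Finset.HasAntidiagonal.antidiagonal (0:ℕ),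
            sol α β cr N bc cc t p.1 * (((p.2 : ℝ) ^ β : ℝ) : ℂ) * sol α β cr N bc cc t p.2
            = 0 := by
          rw [Finset.Nat.antidiagonal_zero, Finset.sum_singleton]
          have : ((0:ℕ) : ℝ) ^ β = 0 := by
            rw [Nat.cast_zero]; exact Real.zero_rpow hβ.ne'
          rw [this]
          simp
        rw [h2]
        simp
      rw [hval]
      exact hasDerivAt_const t _
    | (k' + 1) =>
      have hmain := Aseq_hasDerivAt (α := α) (β := β) (cr := cr) (N := N) (bc := bc)
        (cc := cc) k' t
      convert hmain using 1
      rw [antidiagonal_sum_eq hβ hN (k' + 1) (Nat.succ_pos k') t]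
      rw [lamC]
      push_cast
      ring
  · have hfun : (fun τ => sol α β cr N bc cc τ n) = fun _ => 0 := by
      funext τ; exact sol_not_dvd hdvd
    have hval : -(Complex.I * (((n : ℝ) ^ α : ℝ) : ℂ) * sol α β cr N bc cc t n) +
        ∑ p ∈ Finset.HasAntidiagonal.antidiagonal n,
          sol α β cr N bc cc t p.1 * (((p.2 : ℝ) ^ β : ℝ) : ℂ) * sol α β cr N bc cc t p.2
        = 0 := by
      rw [sol_not_dvd hdvd]
      have hsum : ∑ p ∈ Finset.HasAntidiagonal.antidiagonal n,
          sol α β cr N bc cc t p.1 * (((p.2 : ℝ) ^ β : ℝ) : ℂ) * sol α β cr N bc cc t p.2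
          = 0 := by
        refine Finset.sum_eq_zero (fun p hp => ?_)
        rw [Finset.HasAntidiagonal.mem_antidiagonal] at hp
        by_cases h1 : N ∣ p.1
        · have h2 : ¬ N ∣ p.2 := fun h2 => hdvd (hp ▸ Nat.dvd_add h1 h2)
          rw [sol_not_dvd h2, mul_zero]
        · rw [sol_not_dvd h1, zero_mul, zero_mul]
      rw [hsum]
      simp
    rw [hfun, hval]
    exact hasDerivAt_const t 0


lemma sol_apply_zero (hN : 0 < N) (n : ℕ) :
    sol α β cr N bc cc 0 n = if n = 0 then cc else if n = N then bc else 0 := by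
  by_cases hdvd : N ∣ n
  · obtain ⟨k, rfl⟩ : ∃ k, n = k * N := ⟨n / N, (Nat.div_mul_cancel hdvd).symm⟩
    rw [sol_mul hN]
    match k with
    | 0 => simp [Aseq_zero]
    | 1 =>
      rw [Aseq_one]
      have h1 : (1 * N : ℕ) ≠ 0 := by omega
      rw [if_neg h1, if_pos (Nat.one_mul N)]
      simp
    | (k' + 2) =>
      rw [Aseq_apply_zero (k' + 2) (by omega)]
      have h1 : ((k' + 2) * N : ℕ) ≠ 0 := by positivity
      have h2 : ((k' + 2) * N : ℕ) ≠ N := by nlinarith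
      rw [if_neg h1, if_neg h2]
  · rw [sol_not_dvd hdvd]
    have h1 : n ≠ 0 := fun h => hdvd (h ▸ dvd_zero N)
    have h2 : n ≠ N := fun h => hdvd (h ▸ dvd_refl N)
    rw [if_neg h1, if_neg h2]

lemma sol_apply_N (hN : 0 < N) (t : ℝ) :
    sol α β cr N bc cc t N = Complex.exp (lamC α β cr N * t) * bc := by
  have h : sol α β cr N bc cc t (1 * N) = Aseq α β cr N bc cc 1 t := sol_mul hN t 1
  rw [Nat.one_mul] at h
  rw [h, Aseq_one, Nat.one_mul]

end NIAux

lemma NIAux.exists_good_N {β : ℝ} (hβ : 0 < β) {d C K : ℝ} (hd : 0 < d) (hC : 0 < C) (hK : 0 ≤ K) :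
    ∃ N : ℕ, 3 ≤ N ∧ C * (N : ℝ) ^ K < Real.exp (d * (N : ℝ) ^ β) := by
  set m := ⌈K / β⌉₊ with hm
  have hKm : K ≤ β * m := by
    have h := Nat.le_ceil (K / β)
    calc K = β * (K / β) := by field_simp
      _ ≤ β * m := mul_le_mul_of_nonneg_left h hβ.le
  have h1 : Filter.Tendsto (fun x : ℝ => d * x ^ β) Filter.atTop Filter.atTop :=
    (tendsto_rpow_atTop hβ).const_mul_atTop hd
  have h3 : Filter.Tendsto (fun x : ℝ => Real.exp (d * x ^ β) / (d * x ^ β) ^ m)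
      Filter.atTop Filter.atTop := by
    have := (Real.tendsto_exp_div_pow_atTop m).comp h1
    exact this
  have h4 : Filter.Tendsto
      (fun n : ℕ => Real.exp (d * (n : ℝ) ^ β) / (d * (n : ℝ) ^ β) ^ m)
      Filter.atTop Filter.atTop := h3.comp tendsto_natCast_atTop_atTop
  obtain ⟨N, hgt, hN3⟩ := ((h4.eventually_gt_atTop (C / d ^ m)).and
    (Filter.eventually_ge_atTop 3)).exists
  refine ⟨N, hN3, ?_⟩
  have hN1 : (1 : ℝ) ≤ (N : ℝ) := by exact_mod_cast (by omega : 1 ≤ N)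
  have hNpos : (0 : ℝ) < (N : ℝ) := by linarith
  have hxpos : (0 : ℝ) < (N : ℝ) ^ β := Real.rpow_pos_of_pos hNpos β
  have hpow : (0 : ℝ) < (d * (N : ℝ) ^ β) ^ m := pow_pos (by positivity) m
  have h5 := mul_lt_mul_of_pos_right hgt hpow
  rw [div_mul_cancel₀ _ hpow.ne'] at h5
  have h6 : C / d ^ m * (d * (N : ℝ) ^ β) ^ m = C * ((N : ℝ) ^ β) ^ m := by
    rw [mul_pow]
    field_simp
  rw [h6] at h5
  have hxbm : ((N : ℝ) ^ β) ^ m = (N : ℝ) ^ (β * (m : ℝ)) := by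
    rw [Real.rpow_mul hNpos.le, Real.rpow_natCast]
  have hxK : (N : ℝ) ^ K ≤ (N : ℝ) ^ (β * (m : ℝ)) :=
    Real.rpow_le_rpow_of_exponent_le hN1 hKm
  calc C * (N : ℝ) ^ K ≤ C * ((N : ℝ) ^ β) ^ m := by
        rw [hxbm]; exact mul_le_mul_of_nonneg_left hxK hC.le
    _ < _ := h5

lemma NIAux.jap_pos (x : ℝ) : 0 < jap x := Real.sqrt_pos.mpr (by positivity)

lemma NIAux.one_le_jap (x : ℝ) : 1 ≤ jap x := by
  rw [show (1 : ℝ) = Real.sqrt 1 by rw [Real.sqrt_one], jap]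
  exact Real.sqrt_le_sqrt (by nlinarith)

lemma NIAux.jap_le (x : ℝ) (hx : 1 ≤ x) : jap x ≤ 2 * x := by
  rw [jap, show (2 * x) = Real.sqrt ((2 * x) ^ 2) from (Real.sqrt_sq (by linarith)).symm]
  exact Real.sqrt_le_sqrt (by nlinarith)

lemma NIAux.jap_zero : jap 0 = 1 := by
  rw [jap]
  norm_num

/-- Norm inflation with infinite loss of regularity for `∂ₜu + iD^α u = u D^β u` on the torus,
expressed in terms of the Fourier coefficients `a(t,n)`, `n ∈ ℕ₀`.
Note that for `β > 0` (resp. `α > 0`) Mathlib's real power satisfies `(0:ℝ)^β = 0`,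
which matches the convention `0^β := 0`. -/
theorem norm_inflation_torus (α β s σ : ℝ) (hα : 0 < α) (hβ : 0 < β) :
    ∃ ε₀ : ℝ, ε₀ ∈ Set.Ioo (0 : ℝ) 1 ∧
      ∀ ε ∈ Set.Ioo (0 : ℝ) ε₀,
        ∃ N : ℕ, 3 ≤ N ∧
        ∃ φh : ℕ → ℂ, (∀ n : ℕ, n ≠ 0 → n ≠ N → φh n = 0) ∧
          (∑' n : ℕ, ENNReal.ofReal (jap (n : ℝ) ^ (2 * s) * ‖φh n‖ ^ 2))
              < ENNReal.ofReal (ε ^ 2) ∧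
        ∃ T : ℝ, 0 < T ∧ T < ε ∧
        ∃ a : ℝ → ℕ → ℂ,
          -- initial datum
          (∀ n : ℕ, a 0 n = φh n) ∧
          -- (i) the ODE system `∂ₜ a(t,n) + i n^α a(t,n) = ∑_{n₁+n₂=n} a(t,n₁) n₂^β a(t,n₂)`
          (∀ n : ℕ, ∀ t ∈ Set.Icc (0 : ℝ) T,
            HasDerivWithinAt (fun τ => a τ n)
              (-(Complex.I * (((n : ℝ) ^ α : ℝ) : ℂ) * a t n) +
                ∑ p ∈ Finset.HasAntidiagonal.antidiagonal n,
                  a t p.1 * (((p.2 : ℝ) ^ β : ℝ) : ℂ) * a t p.2)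
              (Set.Icc (0 : ℝ) T) t) ∧
          -- (ii) norm inflation in `H^σ` at time `T`
          (∑' n : ℕ, ENNReal.ofReal (jap (n : ℝ) ^ (2 * σ) * ‖a T n‖ ^ 2))
              > ENNReal.ofReal ((ε ^ 2)⁻¹) := by
  refine ⟨1/2, by norm_num, ?_⟩
  intro ε hε
  obtain ⟨hε0, hε1⟩ := hε
  -- parameters
  set K : ℝ := 2 * |σ| + 2 * |s| with hK
  have hK0 : 0 ≤ K := by positivity
  set d : ℝ := ε ^ 2 / 2 with hd
  have hd0 : 0 < d := by positivity
  set C : ℝ := (4 / ε ^ 4) * (2 : ℝ) ^ K with hC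
  have hC0 : 0 < C := by
    have : (0:ℝ) < (2:ℝ) ^ K := Real.rpow_pos_of_pos (by norm_num) K
    positivity
  obtain ⟨N, hN3, hNbig⟩ := NIAux.exists_good_N hβ hd0 hC0 hK0
  have hN : 0 < N := by omega
  have hN1 : (1:ℝ) ≤ (N:ℝ) := by exact_mod_cast (by omega : 1 ≤ N)
  set jN : ℝ := jap (N : ℝ) with hjN
  have hjpos : 0 < jN := NIAux.jap_pos _
  have hj1 : 1 ≤ jN := NIAux.one_le_jap _
  have hjle : jN ≤ 2 * N := NIAux.jap_le _ hN1
  set cr : ℝ := ε / 2 with hcr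
  have hcr0 : 0 < cr := by positivity
  set T : ℝ := ε / 2 with hT
  set br : ℝ := ε / (2 * jN ^ |s|) with hbr
  have hjs : (0:ℝ) < jN ^ |s| := Real.rpow_pos_of_pos hjpos _
  have hbr0 : 0 < br := by positivity
  set bc : ℂ := ((br : ℝ) : ℂ) with hbc
  set cc : ℂ := ((cr : ℝ) : ℂ) with hccdef
  refine ⟨N, hN3, fun n => if n = 0 then cc else if n = N then bc else 0,
    fun n h0 hN' => by simp only [if_neg h0, if_neg hN'], ?_, T, by positivity, by
      rw [hT]; linarith, NIAux.sol α β cr N bc cc, fun n => NIAux.sol_apply_zero hN n,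
    fun n t ht => (NIAux.sol_hasDerivAt hα hβ hN n t).hasDerivWithinAt, ?_⟩
  · -- initial data bound
    have h0N : (0:ℕ) ≠ N := by omega
    have key : ∀ n : ℕ, n ∉ ({0, N} : Finset ℕ) →
        ENNReal.ofReal (jap (n:ℝ) ^ (2*s) *
          ‖if n = 0 then cc else if n = N then bc else 0‖ ^ 2) = 0 := by
      intro n hn
      simp only [Finset.mem_insert, Finset.mem_singleton, not_or] at hn
      rw [if_neg hn.1, if_neg hn.2]
      simp
    rw [tsum_eq_sum key, Finset.sum_insert (by simp [h0N]), Finset.sum_singleton]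
    have e0 : ENNReal.ofReal (jap ((0:ℕ):ℝ) ^ (2*s) *
        ‖if (0:ℕ) = 0 then cc else if (0:ℕ) = N then bc else 0‖ ^ 2)
        = ENNReal.ofReal (cr ^ 2) := by
      rw [if_pos rfl]
      rw [Nat.cast_zero, NIAux.jap_zero, Real.one_rpow, hccdef, Complex.norm_real, Real.norm_eq_abs,
        abs_of_pos hcr0, one_mul]
    have eN : ENNReal.ofReal (jap ((N:ℕ):ℝ) ^ (2*s) *
        ‖if (N:ℕ) = 0 then cc else if N = N then bc else 0‖ ^ 2)
        = ENNReal.ofReal (jN ^ (2*s) * br ^ 2) := by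
      rw [if_neg (by omega), if_pos rfl, hbc, Complex.norm_real, Real.norm_eq_abs, abs_of_pos hbr0]
    rw [e0, eN, ← ENNReal.ofReal_add (by positivity) (by positivity),
      ENNReal.ofReal_lt_ofReal_iff (by positivity)]
    have hsq : (jN ^ |s|) ^ (2:ℕ) = jN ^ (2*|s|) := by
      rw [← Real.rpow_natCast (jN ^ |s|) 2, ← Real.rpow_mul hjpos.le]
      norm_num [mul_comm]
    have hbrsq : br ^ 2 = ε^2 / (4 * jN ^ (2*|s|)) := by
      rw [hbr, div_pow, mul_pow, hsq]
      norm_num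
    have hdivle : jN ^ (2*s) / jN ^ (2*|s|) ≤ 1 := by
      rw [← Real.rpow_sub hjpos]
      exact Real.rpow_le_one_of_one_le_of_nonpos hj1
        (by have := le_abs_self s; linarith)
    have hjs2 : (0:ℝ) < jN ^ (2*|s|) := Real.rpow_pos_of_pos hjpos _
    have hbound : jN ^ (2*s) * br ^ 2 ≤ ε^2/4 := by
      rw [hbrsq]
      calc jN ^ (2*s) * (ε^2 / (4 * jN ^ (2*|s|)))
          = ε^2/4 * (jN ^ (2*s) / jN ^ (2*|s|)) := by field_simp
        _ ≤ ε^2/4 * 1 := mul_le_mul_of_nonneg_left hdivle (by positivity)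
        _ = ε^2/4 := mul_one _
    have hcr2 : cr ^ 2 = ε^2/4 := by rw [hcr, hT]; ring
    nlinarith [sq_nonneg ε, hε0]
  · -- norm inflation
    refine lt_of_lt_of_le ?_ (ENNReal.le_tsum N)
    have haN : NIAux.sol α β cr N bc cc T N
        = Complex.exp (NIAux.lamC α β cr N * T) * bc := NIAux.sol_apply_N hN T
    have hre : (NIAux.lamC α β cr N * (T:ℂ)).re = cr * (N:ℝ)^β * T := by
      simp [NIAux.lamC, Complex.mul_re, Complex.sub_re, Complex.sub_im, Complex.mul_im]
    have habs : ‖NIAux.sol α β cr N bc cc T N‖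
        = Real.exp (cr * (N:ℝ)^β * T) * br := by
      rw [haN, norm_mul, Complex.norm_exp, hre, hbc, Complex.norm_real, Real.norm_eq_abs, abs_of_pos hbr0]
    rw [habs, ENNReal.ofReal_lt_ofReal_iff (by positivity)]
    -- now a real inequality
    have hexp2 : (Real.exp (cr * (N:ℝ)^β * T))^2 = Real.exp (d * (N:ℝ)^β) := by
      rw [← Real.exp_nat_mul]
      congr 1
      push_cast
      rw [hcr, hT, hd]
      ring
    have hsq : (jN ^ |s|) ^ (2:ℕ) = jN ^ (2*|s|) := by
      rw [← Real.rpow_natCast (jN ^ |s|) 2, ← Real.rpow_mul hjpos.le]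
      norm_num [mul_comm]
    have hbrsq : br ^ 2 = ε^2 / (4 * jN ^ (2*|s|)) := by
      rw [hbr, div_pow, mul_pow, hsq]
      norm_num
    have hjs2 : (0:ℝ) < jN ^ (2*|s|) := Real.rpow_pos_of_pos hjpos _
    have hfac : jN ^ (2*σ) * br ^ 2 = ε^2/4 * jN ^ (2*σ - 2*|s|) := by
      rw [hbrsq, Real.rpow_sub hjpos]
      field_simp
    have hjb : (2*(N:ℝ)) ^ (-K) ≤ jN ^ (2*σ - 2*|s|) := by
      have s1 : jN ^ (-K) ≤ jN ^ (2*σ - 2*|s|) :=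
        Real.rpow_le_rpow_of_exponent_le hj1
          (by have := neg_abs_le σ; rw [hK]; linarith)
      have s2 : (2*(N:ℝ)) ^ (-K) ≤ jN ^ (-K) :=
        Real.rpow_le_rpow_of_nonpos hjpos hjle (neg_nonpos.mpr hK0)
      linarith
    have h2N : (0:ℝ) < 2*(N:ℝ) := by linarith
    have h2NK : (0:ℝ) < (2*(N:ℝ)) ^ (-K) := Real.rpow_pos_of_pos h2N _
    have hNK : (0:ℝ) < (N:ℝ) ^ K := Real.rpow_pos_of_pos (by linarith) _
    have h2K : (0:ℝ) < (2:ℝ) ^ K := Real.rpow_pos_of_pos (by norm_num) _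
    have hexppos : (0:ℝ) < Real.exp (d * (N:ℝ)^β) := Real.exp_pos _
    have hcalc : jN ^ (2*σ) * (Real.exp (cr * (N:ℝ)^β * T) * br)^2
        = ε^2/4 * jN ^ (2*σ - 2*|s|) * Real.exp (d * (N:ℝ)^β) := by
      rw [mul_pow, hexp2, ← hfac]
      ring
    rw [hcalc]
    have step1 : ε^2/4 * ((2*(N:ℝ)) ^ (-K)) * (C * (N:ℝ)^K)
        < ε^2/4 * ((2*(N:ℝ)) ^ (-K)) * Real.exp (d * (N:ℝ)^β) := by
      apply mul_lt_mul_of_pos_left hNbig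
      positivity
    have step2 : ε^2/4 * ((2*(N:ℝ)) ^ (-K)) * Real.exp (d * (N:ℝ)^β)
        ≤ ε^2/4 * jN ^ (2*σ - 2*|s|) * Real.exp (d * (N:ℝ)^β) := by
      apply mul_le_mul_of_nonneg_right _ hexppos.le
      apply mul_le_mul_of_nonneg_left hjb (by positivity)
    have hEq : ε^2/4 * ((2*(N:ℝ)) ^ (-K)) * (C * (N:ℝ)^K) = (ε^2)⁻¹ := by
      rw [Real.rpow_neg h2N.le, Real.mul_rpow (by norm_num) (Nat.cast_nonneg N), hC]
      field_simp
    linarith
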